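/- Let f, g, h : ℝ^d → [0,∞) be measurable with f(x)^{1/2} g(y)^{1/2} ≤ h((x+y)/2) for all x, y ∈ ℝ^d (Prékopa condition with s = 1/2). Then (∫f)^{1/2}(∫g)^{1/2} ≤ ∫h. -/

import Mathlib

open MeasureTheory
open scoped ENNReal NNReal
open Set

section PLaux

lemma amgm (a b : ℝ≥0∞) : a ^ (1/2:ℝ) * b ^ (1/2:ℝ) ≤ (a + b) / 2 := by
  rcases eq_or_ne a ⊤ with ha | ha
  · simp [ha, top_add, ENNReal.top_div_of_ne_top]
  rcases eq_or_ne b ⊤ with hb | hb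
  · simp [hb, add_top, ENNReal.top_div_of_ne_top]
  lift a to ℝ≥0 using ha
  lift b to ℝ≥0 using hb
  have h := NNReal.geom_mean_le_arith_mean2_weighted (w₁ := 1/2) (w₂ := 1/2) (p₁ := a) (p₂ := b) (by rw [← NNReal.coe_inj]; push_cast; norm_num)
  calc (a:ℝ≥0∞) ^ (1/2:ℝ) * (b:ℝ≥0∞) ^ (1/2:ℝ)
      = ((a ^ (((1:ℝ≥0)/2:ℝ≥0):ℝ) * b ^ (((1:ℝ≥0)/2:ℝ≥0):ℝ) : ℝ≥0) : ℝ≥0∞) := by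
        push_cast [ENNReal.coe_rpow_of_nonneg _ (by norm_num : (0:ℝ) ≤ 1/2)]
        norm_num
    _ ≤ ((1/2 * a + 1/2 * b : ℝ≥0) : ℝ≥0∞) := by exact_mod_cast h
    _ = ((a:ℝ≥0∞) + b) / 2 := by
        push_cast
        rw [ENNReal.div_eq_inv_mul (a := (a:ℝ≥0∞) + b), mul_add]
        norm_num [ENNReal.div_eq_inv_mul]

-- translation trick for nonempty compacts
lemma sumset_compact {K L D : Set ℝ} (hKc : IsCompact K) (hLc : IsCompact L)
    (hK : K.Nonempty) (hL : L.Nonempty) (hD : MeasurableSet D)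
    (hsub : ∀ x ∈ K, ∀ y ∈ L, x + y ∈ D) :
    volume K + volume L ≤ volume D := by
  set a := sSup K with ha_def
  set b := sInf L with hb_def
  have haK : a ∈ K := hKc.sSup_mem hK
  have hbL : b ∈ L := hLc.sInf_mem hL
  set K' := (· + b) '' K with hK'
  set L' := (· + a) '' L with hL'
  have hK'D : K' ⊆ D := by rintro _ ⟨x, hx, rfl⟩; exact hsub x hx b hbL
  have hL'D : L' ⊆ D := by rintro _ ⟨y, hy, rfl⟩; show y + a ∈ D; rw [add_comm]; exact hsub a haK y hy
  have hK'm : MeasurableSet K' := (hKc.image (continuous_add_right b)).measurableSet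
  have hL'm : MeasurableSet L' := (hLc.image (continuous_add_right a)).measurableSet
  have hinter : K' ∩ L' ⊆ {a + b} := by
    rintro z ⟨⟨x, hx, hxz⟩, ⟨y, hy, hyz⟩⟩
    simp only at hxz hyz
    simp only [mem_singleton_iff]
    have h1 := le_csSup hKc.bddAbove hx
    have h2 := csInf_le hLc.bddBelow hy
    rw [← ha_def] at h1
    rw [← hb_def] at h2
    linarith
  have hvolK : volume K' = volume K := by
    simp [hK', Set.image_add_right, measure_preimage_add_right]
  have hvolL : volume L' = volume L := by
    simp [hL', Set.image_add_right, measure_preimage_add_right]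
  have key : volume (K' ∪ L') + volume (K' ∩ L') = volume K' + volume L' :=
    measure_union_add_inter K' hL'm
  have hz : volume (K' ∩ L') = 0 :=
    le_antisymm (le_trans (measure_mono hinter) (by simp)) zero_le
  calc volume K + volume L = volume (K' ∪ L') := by rw [← hvolK, ← hvolL, ← key, hz, add_zero]
    _ ≤ volume D := measure_mono (union_subset hK'D hL'D)

lemma sumset_meas {A B D : Set ℝ} (hA : MeasurableSet A) (hB : MeasurableSet B)
    (hAne : A.Nonempty) (hBne : B.Nonempty) (hD : MeasurableSet D)
    (hsub : ∀ x ∈ A, ∀ y ∈ B, x + y ∈ D) :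
    volume A + volume B ≤ volume D := by
  have hA' : volume A ≤ ⨆ (K : {K : Set ℝ // K ⊆ A ∧ IsCompact K}), volume K.1 := by
    rw [hA.measure_eq_iSup_isCompact]
    exact iSup_le fun K => iSup_le fun h1 => iSup_le fun h2 =>
      le_iSup (fun p : {K : Set ℝ // K ⊆ A ∧ IsCompact K} => volume p.1) ⟨K, h1, h2⟩
  have hB' : volume B ≤ ⨆ (L : {L : Set ℝ // L ⊆ B ∧ IsCompact L}), volume L.1 := by
    rw [hB.measure_eq_iSup_isCompact]
    exact iSup_le fun K => iSup_le fun h1 => iSup_le fun h2 =>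
      le_iSup (fun p : {L : Set ℝ // L ⊆ B ∧ IsCompact L} => volume p.1) ⟨K, h1, h2⟩
  have : Nonempty {K : Set ℝ // K ⊆ A ∧ IsCompact K} := ⟨⟨∅, empty_subset _, isCompact_empty⟩⟩
  have : Nonempty {L : Set ℝ // L ⊆ B ∧ IsCompact L} := ⟨⟨∅, empty_subset _, isCompact_empty⟩⟩
  refine le_trans (add_le_add hA' hB') (ENNReal.iSup_add_iSup_le ?_)
  rintro ⟨K, hKA, hKc⟩ ⟨L, hLB, hLc⟩
  rcases K.eq_empty_or_nonempty with rfl | hKne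
  · simp only [measure_empty, zero_add]
    obtain ⟨x0, hx0⟩ := hAne
    have himg : (· + x0) '' L ⊆ D := by
      rintro _ ⟨y, hy, rfl⟩; show y + x0 ∈ D; rw [add_comm]; exact hsub x0 hx0 y (hLB hy)
    calc volume L = volume ((· + x0) '' L) := by
          simp [Set.image_add_right, measure_preimage_add_right]
      _ ≤ volume D := measure_mono himg
  rcases L.eq_empty_or_nonempty with rfl | hLne
  · simp only [measure_empty, add_zero]
    obtain ⟨y0, hy0⟩ := hBne
    have himg : (· + y0) '' K ⊆ D := by
      rintro _ ⟨x, hx, rfl⟩; exact hsub x (hKA hx) y0 hy0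
    calc volume K = volume ((· + y0) '' K) := by
          simp [Set.image_add_right, measure_preimage_add_right]
      _ ≤ volume D := measure_mono himg
  exact sumset_compact hKc hLc hKne hLne hD fun x hx y hy => hsub x (hKA hx) y (hLB hy)

-- midpoint version
lemma midset_meas {A B C : Set ℝ} (hA : MeasurableSet A) (hB : MeasurableSet B)
    (hAne : A.Nonempty) (hBne : B.Nonempty) (hC : MeasurableSet C)
    (hsub : ∀ x ∈ A, ∀ y ∈ B, (x + y) / 2 ∈ C) :
    volume A + volume B ≤ 2 * volume C := by
  set D : Set ℝ := (fun x : ℝ => x * 2⁻¹) ⁻¹' C with hD_def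
  have hDm : MeasurableSet D := (measurable_mul_const _) hC
  have hvolD : volume D = 2 * volume C := by
    rw [hD_def, Real.volume_preimage_mul_right (by norm_num : (2:ℝ)⁻¹ ≠ 0)]
    norm_num
  have := sumset_meas hA hB hAne hBne hDm (fun x hx y hy => by
    show (x + y) * 2⁻¹ ∈ C
    rw [← div_eq_mul_inv]; exact hsub x hx y hy)
  rw [hvolD] at this; exact this

-- layer-cake upper estimate for superlevel measures of a bounded function
lemma layer_trunc {f : ℝ → ℝ} (hfm : Measurable f) (hf0 : ∀ x, 0 ≤ f x) {M : ℝ}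
    (hM : 0 < M) (hfM : ∀ x, f x ≤ M) :
    ∫⁻ x, ENNReal.ofReal (f x) = ∫⁻ t in Ioo 0 M, volume {x | t ≤ f x} := by
  rw [lintegral_eq_lintegral_meas_le volume (ae_of_all _ hf0) hfm.aemeasurable]
  rw [← Ioo_union_Ici_eq_Ioi hM, lintegral_union measurableSet_Ici]
  · have h0 : ∫⁻ t in Ici M, volume {x | t ≤ f x} = ∫⁻ t in Ioi M, volume {x | t ≤ f x} := by
      refine setLIntegral_congr ?_
      exact (Ioi_ae_eq_Ici (a := M)).symm
    have h1 : ∫⁻ t in Ioi M, volume {x | t ≤ f x} = 0 := by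
      rw [setLIntegral_congr_fun measurableSet_Ioi ?_, lintegral_zero]
      intro t ht
      have : {x | t ≤ f x} = ∅ := by
        ext x; simp only [mem_setOf_eq, mem_empty_iff_false, iff_false, not_le]
        exact lt_of_le_of_lt (hfM x) ht
      simp [this]
    rw [h0, h1, add_zero]
  · exact (Iio_disjoint_Ici le_rfl).mono_left Ioo_subset_Iio_self

lemma PL1d_real {f g h : ℝ → ℝ} {C : ℝ} (hfm : Measurable f) (hgm : Measurable g)
    (hhm : Measurable h) (hf0 : ∀ x, 0 ≤ f x) (hg0 : ∀ x, 0 ≤ g x) (hh0 : ∀ x, 0 ≤ h x)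
    (hfC : ∀ x, f x ≤ C) (hgC : ∀ x, g x ≤ C)
    (hcond : ∀ x y, f x ^ (1/2:ℝ) * g y ^ (1/2:ℝ) ≤ h ((x + y) / 2)) :
    (∫⁻ x, ENNReal.ofReal (f x)) ^ (1/2:ℝ) * (∫⁻ x, ENNReal.ofReal (g x)) ^ (1/2:ℝ) ≤
      ∫⁻ x, ENNReal.ofReal (h x) := by
  have bddf : BddAbove (range f) := ⟨C, by rintro _ ⟨x, rfl⟩; exact hfC x⟩
  have bddg : BddAbove (range g) := ⟨C, by rintro _ ⟨x, rfl⟩; exact hgC x⟩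
  set Mf := sSup (range f) with hMf_def
  set Mg := sSup (range g) with hMg_def
  have hfMf : ∀ x, f x ≤ Mf := fun x => le_csSup bddf (mem_range_self x)
  have hgMg : ∀ x, g x ≤ Mg := fun x => le_csSup bddg (mem_range_self x)
  by_cases hMf0 : Mf ≤ 0
  · have : ∀ x, f x = 0 := fun x => le_antisymm ((hfMf x).trans hMf0) (hf0 x)
    simp only [this, ENNReal.ofReal_zero, lintegral_zero]
    rw [ENNReal.zero_rpow_of_pos (by norm_num), zero_mul]
    exact zero_le
  by_cases hMg0 : Mg ≤ 0
  · have : ∀ x, g x = 0 := fun x => le_antisymm ((hgMg x).trans hMg0) (hg0 x)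
    simp only [this, ENNReal.ofReal_zero, lintegral_zero]
    rw [ENNReal.zero_rpow_of_pos (by norm_num), mul_zero]
    exact zero_le
  push_neg at hMf0 hMg0
  set c := Real.sqrt (Mg / Mf) with hc_def
  have hc : 0 < c := Real.sqrt_pos.2 (div_pos hMg0 hMf0)
  set M := Real.sqrt (Mf * Mg) with hM_def
  have hM : 0 < M := Real.sqrt_pos.2 (mul_pos hMf0 hMg0)
  set f' := fun x => c * f x with hf'_def
  set g' := fun x => c⁻¹ * g x with hg'_def
  have hcMf : c * Mf = M := by
    rw [hc_def, hM_def]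
    calc Real.sqrt (Mg / Mf) * Mf = Real.sqrt (Mg / Mf) * Real.sqrt (Mf ^ 2) := by
          rw [Real.sqrt_sq hMf0.le]
      _ = Real.sqrt (Mg / Mf * Mf ^ 2) := (Real.sqrt_mul (by positivity) _).symm
      _ = Real.sqrt (Mf * Mg) := by congr 1; field_simp
  have hcMg : c⁻¹ * Mg = M := by
    rw [hc_def, hM_def, ← Real.sqrt_inv, inv_div]
    calc Real.sqrt (Mf / Mg) * Mg = Real.sqrt (Mf / Mg) * Real.sqrt (Mg ^ 2) := by
          rw [Real.sqrt_sq hMg0.le]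
      _ = Real.sqrt (Mf / Mg * Mg ^ 2) := (Real.sqrt_mul (by positivity) _).symm
      _ = Real.sqrt (Mf * Mg) := by congr 1; field_simp
  have hf'M : ∀ x, f' x ≤ M := fun x => by
    rw [← hcMf]; exact mul_le_mul_of_nonneg_left (hfMf x) hc.le
  have hg'M : ∀ x, g' x ≤ M := fun x => by
    rw [← hcMg]; exact mul_le_mul_of_nonneg_left (hgMg x) (inv_nonneg.2 hc.le)
  have hf'ne : ∀ t, t < M → ∃ x, t ≤ f' x := by
    intro t ht
    have : t / c < Mf := by rw [div_lt_iff₀ hc]; rw [← hcMf] at ht; linarith [ht]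
    obtain ⟨_, ⟨x, rfl⟩, hx⟩ := exists_lt_of_lt_csSup ⟨f 0, mem_range_self 0⟩ this
    have h2 := (div_lt_iff₀ hc).mp hx
    exact ⟨x, by show t ≤ c * f x; nlinarith⟩
  have hg'ne : ∀ t, t < M → ∃ y, t ≤ g' y := by
    intro t ht
    have hc' : 0 < c⁻¹ := inv_pos.2 hc
    have : t / c⁻¹ < Mg := by rw [div_lt_iff₀ hc']; rw [← hcMg] at ht; linarith [ht]
    obtain ⟨_, ⟨y, rfl⟩, hy⟩ := exists_lt_of_lt_csSup ⟨g 0, mem_range_self 0⟩ this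
    have h2 := (div_lt_iff₀ hc').mp hy
    exact ⟨y, by show t ≤ c⁻¹ * g y; nlinarith⟩
  have hf'm : Measurable f' := hfm.const_mul c
  have hg'm : Measurable g' := hgm.const_mul c⁻¹
  have hf'0 : ∀ x, 0 ≤ f' x := fun x => mul_nonneg hc.le (hf0 x)
  have hg'0 : ∀ x, 0 ≤ g' x := fun x => mul_nonneg (inv_nonneg.2 hc.le) (hg0 x)
  have hcc : c ^ (1/2:ℝ) * (c⁻¹) ^ (1/2:ℝ) = 1 := by
    rw [← Real.mul_rpow hc.le (inv_nonneg.2 hc.le), mul_inv_cancel₀ hc.ne', Real.one_rpow]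
  have cond' : ∀ x y, f' x ^ (1/2:ℝ) * g' y ^ (1/2:ℝ) ≤ h ((x + y) / 2) := by
    intro x y
    rw [hf'_def, hg'_def]
    show (c * f x) ^ (1/2:ℝ) * (c⁻¹ * g y) ^ (1/2:ℝ) ≤ _
    rw [Real.mul_rpow hc.le (hf0 x), Real.mul_rpow (inv_nonneg.2 hc.le) (hg0 y)]
    calc c ^ (1/2:ℝ) * f x ^ (1/2:ℝ) * ((c⁻¹) ^ (1/2:ℝ) * g y ^ (1/2:ℝ))
        = (c ^ (1/2:ℝ) * (c⁻¹) ^ (1/2:ℝ)) * (f x ^ (1/2:ℝ) * g y ^ (1/2:ℝ)) := by ring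
      _ = f x ^ (1/2:ℝ) * g y ^ (1/2:ℝ) := by rw [hcc, one_mul]
      _ ≤ h ((x + y) / 2) := hcond x y
  set F : ℝ → ℝ≥0∞ := fun t => volume {x | t ≤ f' x} with hF_def
  set G : ℝ → ℝ≥0∞ := fun t => volume {x | t ≤ g' x} with hG_def
  set H : ℝ → ℝ≥0∞ := fun t => volume {x | t ≤ h x} with hH_def
  have hFanti : Antitone F := fun s t hst =>
    measure_mono fun x hx => le_trans hst hx
  have hGanti : Antitone G := fun s t hst =>
    measure_mono fun x hx => le_trans hst hx
  have hHanti : Antitone H := fun s t hst =>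
    measure_mono fun x hx => le_trans hst hx
  have key : ∀ t ∈ Ioo (0:ℝ) M, F t + G t ≤ 2 * H t := by
    rintro t ⟨ht0, htM⟩
    obtain ⟨x0, hx0⟩ := hf'ne t htM
    obtain ⟨y0, hy0⟩ := hg'ne t htM
    refine midset_meas (measurableSet_le measurable_const hf'm)
      (measurableSet_le measurable_const hg'm) ⟨x0, hx0⟩ ⟨y0, hy0⟩
      (measurableSet_le measurable_const hhm) ?_
    intro x hx y hy
    show t ≤ h ((x + y) / 2)
    have ht2 : t ^ (1/2:ℝ) * t ^ (1/2:ℝ) = t := by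
      rw [← Real.rpow_add ht0]; norm_num
    calc t = t ^ (1/2:ℝ) * t ^ (1/2:ℝ) := ht2.symm
      _ ≤ f' x ^ (1/2:ℝ) * g' y ^ (1/2:ℝ) := by
          apply mul_le_mul (Real.rpow_le_rpow ht0.le hx (by norm_num))
            (Real.rpow_le_rpow ht0.le hy (by norm_num))
            (Real.rpow_nonneg ht0.le _) (Real.rpow_nonneg (hf'0 x) _)
      _ ≤ h ((x + y) / 2) := cond' x y
  have hLf : ∫⁻ x, ENNReal.ofReal (f' x) = ∫⁻ t in Ioo 0 M, F t :=
    layer_trunc hf'm hf'0 hM hf'M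
  have hLg : ∫⁻ x, ENNReal.ofReal (g' x) = ∫⁻ t in Ioo 0 M, G t :=
    layer_trunc hg'm hg'0 hM hg'M
  have hsf : ∫⁻ x, ENNReal.ofReal (f' x) = ENNReal.ofReal c * ∫⁻ x, ENNReal.ofReal (f x) := by
    simp_rw [hf'_def, ENNReal.ofReal_mul hc.le]
    exact lintegral_const_mul _ hfm.ennreal_ofReal
  have hsg : ∫⁻ x, ENNReal.ofReal (g' x) = ENNReal.ofReal c⁻¹ * ∫⁻ x, ENNReal.ofReal (g x) := by
    simp_rw [hg'_def, ENNReal.ofReal_mul (inv_nonneg.2 hc.le)]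
    exact lintegral_const_mul _ hgm.ennreal_ofReal
  have heq : (∫⁻ x, ENNReal.ofReal (f' x)) ^ (1/2:ℝ) * (∫⁻ x, ENNReal.ofReal (g' x)) ^ (1/2:ℝ)
      = (∫⁻ x, ENNReal.ofReal (f x)) ^ (1/2:ℝ) * (∫⁻ x, ENNReal.ofReal (g x)) ^ (1/2:ℝ) := by
    rw [hsf, hsg, ENNReal.mul_rpow_of_nonneg _ _ (by norm_num : (0:ℝ) ≤ 1/2),
      ENNReal.mul_rpow_of_nonneg _ _ (by norm_num : (0:ℝ) ≤ 1/2), mul_mul_mul_comm,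
      ← ENNReal.mul_rpow_of_nonneg _ _ (by norm_num : (0:ℝ) ≤ 1/2),
      ← ENNReal.ofReal_mul hc.le, mul_inv_cancel₀ hc.ne', ENNReal.ofReal_one,
      ENNReal.one_rpow, one_mul]
  calc (∫⁻ x, ENNReal.ofReal (f x)) ^ (1/2:ℝ) * (∫⁻ x, ENNReal.ofReal (g x)) ^ (1/2:ℝ)
      = (∫⁻ x, ENNReal.ofReal (f' x)) ^ (1/2:ℝ) * (∫⁻ x, ENNReal.ofReal (g' x)) ^ (1/2:ℝ) :=
        heq.symm
    _ ≤ ((∫⁻ x, ENNReal.ofReal (f' x)) + ∫⁻ x, ENNReal.ofReal (g' x)) / 2 := amgm _ _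
    _ = ((∫⁻ t in Ioo 0 M, F t) + ∫⁻ t in Ioo 0 M, G t) / 2 := by rw [hLf, hLg]
    _ = (∫⁻ t in Ioo 0 M, (F t + G t)) / 2 := by
        rw [lintegral_add_left hFanti.measurable]
    _ ≤ (∫⁻ t in Ioo 0 M, 2 * H t) / 2 := by
        exact ENNReal.div_le_div_right
          (setLIntegral_mono (hHanti.measurable.const_mul 2) key) 2
    _ = (2 * ∫⁻ t in Ioo 0 M, H t) / 2 := by
        rw [lintegral_const_mul 2 hHanti.measurable]
    _ ≤ ∫⁻ t in Ioo 0 M, H t := by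
        rw [mul_comm, mul_div_assoc, ENNReal.div_self (by norm_num) (by norm_num), mul_one]
    _ ≤ ∫⁻ t in Ioi 0, H t :=
        lintegral_mono' (Measure.restrict_mono Ioo_subset_Ioi_self le_rfl) le_rfl
    _ = ∫⁻ x, ENNReal.ofReal (h x) :=
        (lintegral_eq_lintegral_meas_le volume (ae_of_all _ hh0) hhm.aemeasurable).symm

lemma hrh (a : ℝ≥0∞) : a ^ (1/2:ℝ) * a ^ (1/2:ℝ) = a := by
  rw [← ENNReal.rpow_add_of_nonneg _ _ (by norm_num) (by norm_num)]
  norm_num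

lemma isup_min (a : ℝ≥0∞) : ⨆ n : ℕ, min a n = a := by
  rcases eq_or_ne a ⊤ with rfl | ha
  · simp only [min_eq_right (le_top : (_:ℝ≥0∞) ≤ ⊤)]
    exact ENNReal.iSup_natCast
  · obtain ⟨n, hn⟩ := ENNReal.exists_nat_gt ha
    exact le_antisymm (iSup_le fun _ => min_le_left _ _)
      (le_iSup_of_le n (by rw [min_eq_left hn.le]))

lemma PL1d_enn {φ ψ χ : ℝ → ℝ≥0∞} (hφ : Measurable φ) (hψ : Measurable ψ) (hχ : Measurable χ)
    (hcond : ∀ x y, φ x ^ (1/2:ℝ) * ψ y ^ (1/2:ℝ) ≤ χ ((x + y) / 2)) :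
    (∫⁻ x, φ x) ^ (1/2:ℝ) * (∫⁻ x, ψ x) ^ (1/2:ℝ) ≤ ∫⁻ x, χ x := by
  -- truncations
  have main : ∀ n : ℕ, (∫⁻ x, min (φ x) n) ^ (1/2:ℝ) * (∫⁻ x, min (ψ x) n) ^ (1/2:ℝ)
      ≤ ∫⁻ x, χ x := by
    intro n
    set f : ℝ → ℝ := fun x => (min (φ x) n).toReal with hf_def
    set g : ℝ → ℝ := fun x => (min (ψ x) n).toReal with hg_def
    set h : ℝ → ℝ := fun x => (min (χ x) n).toReal with hh_def
    have hmf : Measurable f := (hφ.min measurable_const).ennreal_toReal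
    have hmg : Measurable g := (hψ.min measurable_const).ennreal_toReal
    have hmh : Measurable h := (hχ.min measurable_const).ennreal_toReal
    have hfin : ∀ a : ℝ≥0∞, min a (n:ℝ≥0∞) ≠ ⊤ :=
      fun a => (lt_of_le_of_lt (min_le_right _ _) (ENNReal.natCast_lt_top n)).ne
    have hof : ∀ x, ENNReal.ofReal (f x) = min (φ x) n :=
      fun x => ENNReal.ofReal_toReal (hfin _)
    have hog : ∀ x, ENNReal.ofReal (g x) = min (ψ x) n :=
      fun x => ENNReal.ofReal_toReal (hfin _)
    have hoh : ∀ x, ENNReal.ofReal (h x) = min (χ x) n :=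
      fun x => ENNReal.ofReal_toReal (hfin _)
    have hbd : ∀ x, f x ≤ (n:ℝ) := fun x => by
      rw [hf_def]
      calc (min (φ x) n).toReal ≤ ((n:ℝ≥0∞)).toReal :=
            ENNReal.toReal_mono (ENNReal.natCast_ne_top n) (min_le_right _ _)
        _ = (n:ℝ) := by simp
    have hbg : ∀ x, g x ≤ (n:ℝ) := fun x => by
      rw [hg_def]
      calc (min (ψ x) n).toReal ≤ ((n:ℝ≥0∞)).toReal :=
            ENNReal.toReal_mono (ENNReal.natCast_ne_top n) (min_le_right _ _)
        _ = (n:ℝ) := by simp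
    have hcond' : ∀ x y, f x ^ (1/2:ℝ) * g y ^ (1/2:ℝ) ≤ h ((x + y) / 2) := by
      intro x y
      rw [hf_def, hg_def, hh_def]
      show (min (φ x) n).toReal ^ (1/2:ℝ) * (min (ψ y) n).toReal ^ (1/2:ℝ) ≤ _
      rw [ENNReal.toReal_rpow, ENNReal.toReal_rpow, ← ENNReal.toReal_mul]
      apply ENNReal.toReal_mono (hfin _)
      refine le_min ?_ ?_
      · refine le_trans (mul_le_mul' (ENNReal.rpow_le_rpow (min_le_left _ _) (by norm_num))
          (ENNReal.rpow_le_rpow (min_le_left _ _) (by norm_num))) (hcond x y)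
      · calc (min (φ x) n) ^ (1/2:ℝ) * (min (ψ y) n) ^ (1/2:ℝ)
            ≤ (n:ℝ≥0∞) ^ (1/2:ℝ) * (n:ℝ≥0∞) ^ (1/2:ℝ) :=
              mul_le_mul' (ENNReal.rpow_le_rpow (min_le_right _ _) (by norm_num))
                (ENNReal.rpow_le_rpow (min_le_right _ _) (by norm_num))
          _ = (n:ℝ≥0∞) := hrh _
    have := PL1d_real hmf hmg hmh (fun x => ENNReal.toReal_nonneg)
      (fun x => ENNReal.toReal_nonneg) (fun x => ENNReal.toReal_nonneg) hbd hbg hcond'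
    simp_rw [hof, hog, hoh] at this
    refine le_trans this (lintegral_mono fun x => min_le_left _ _)
  -- pass to the limit
  rcases eq_or_ne (∫⁻ x, φ x) 0 with h0 | hφ0
  · rw [h0, ENNReal.zero_rpow_of_pos (by norm_num), zero_mul]; exact zero_le
  rcases eq_or_ne (∫⁻ x, ψ x) 0 with h0 | hψ0
  · rw [h0, ENNReal.zero_rpow_of_pos (by norm_num), mul_zero]; exact zero_le
  have hmono : ∀ (ξ : ℝ → ℝ≥0∞), Monotone fun (n:ℕ) => ∫⁻ x, min (ξ x) n := by
    intro ξ m n hmn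
    exact lintegral_mono fun x => min_le_min le_rfl (by exact_mod_cast Nat.cast_le.2 hmn)
  have hsup : ∀ (ξ : ℝ → ℝ≥0∞), Measurable ξ → (⨆ n : ℕ, ∫⁻ x, min (ξ x) n) = ∫⁻ x, ξ x := by
    intro ξ hξ
    rw [← lintegral_iSup (fun n => hξ.min measurable_const)
      (fun m n hmn x => min_le_min le_rfl (by exact_mod_cast Nat.cast_le.2 hmn))]
    simp_rw [isup_min]
  have hA : Filter.Tendsto (fun n : ℕ => ∫⁻ x, min (φ x) n) Filter.atTop (nhds (∫⁻ x, φ x)) := by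
    rw [← hsup φ hφ]; exact tendsto_atTop_iSup (hmono φ)
  have hB : Filter.Tendsto (fun n : ℕ => ∫⁻ x, min (ψ x) n) Filter.atTop (nhds (∫⁻ x, ψ x)) := by
    rw [← hsup ψ hψ]; exact tendsto_atTop_iSup (hmono ψ)
  have hrpow_ne : (∫⁻ x, φ x) ^ (1/2:ℝ) ≠ 0 := by
    simp [ENNReal.rpow_eq_zero_iff, hφ0]
  have hrpow_ne' : (∫⁻ x, ψ x) ^ (1/2:ℝ) ≠ 0 := by
    simp [ENNReal.rpow_eq_zero_iff, hψ0]
  have hT : Filter.Tendsto (fun n : ℕ => (∫⁻ x, min (φ x) n) ^ (1/2:ℝ) *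
      (∫⁻ x, min (ψ x) n) ^ (1/2:ℝ)) Filter.atTop
      (nhds ((∫⁻ x, φ x) ^ (1/2:ℝ) * (∫⁻ x, ψ x) ^ (1/2:ℝ))) :=
    ENNReal.Tendsto.mul (hA.ennrpow_const _) (Or.inl hrpow_ne)
      (hB.ennrpow_const _) (Or.inl hrpow_ne')
  exact le_of_tendsto hT (Filter.Eventually.of_forall main)

def PLS (α : Type*) [MeasureSpace α] [AddCommGroup α] [Module ℝ α] : Prop :=
  ∀ φ ψ χ : α → ℝ≥0∞, Measurable φ → Measurable ψ → Measurable χ →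
    (∀ x y, φ x ^ (1/2:ℝ) * ψ y ^ (1/2:ℝ) ≤ χ (midpoint ℝ x y)) →
    (∫⁻ x, φ x) ^ (1/2:ℝ) * (∫⁻ x, ψ x) ^ (1/2:ℝ) ≤ ∫⁻ x, χ x

lemma midR (x y : ℝ) : midpoint ℝ x y = (x + y) / 2 := by
  rw [midpoint_eq_smul_add, smul_eq_mul]
  norm_num
  ring

lemma PLS_R : PLS ℝ := by
  intro φ ψ χ hφ hψ hχ hcond
  exact PL1d_enn hφ hψ hχ (fun x y => by rw [← midR]; exact hcond x y)

lemma midpoint_prod {α β : Type*} [AddCommGroup α] [Module ℝ α] [AddCommGroup β] [Module ℝ β]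
    (p q : α × β) : midpoint ℝ p q = (midpoint ℝ p.1 q.1, midpoint ℝ p.2 q.2) := by
  rw [midpoint_eq_smul_add, midpoint_eq_smul_add, midpoint_eq_smul_add]
  rfl

lemma PLS_prod (α : Type*) [MeasureSpace α] [AddCommGroup α] [Module ℝ α]
    [SigmaFinite (volume : Measure α)] [MeasurableAdd₂ α]
    (hPL : PLS α) : PLS (ℝ × α) := by
  intro φ ψ χ hφ hψ hχ hcond
  set Φ : ℝ → ℝ≥0∞ := fun s => ∫⁻ z, φ (s, z) with hΦ_def
  set Ψ : ℝ → ℝ≥0∞ := fun s => ∫⁻ z, ψ (s, z) with hΨ_def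
  set Χ : ℝ → ℝ≥0∞ := fun s => ∫⁻ z, χ (s, z) with hΧ_def
  have hΦm : Measurable Φ := hφ.lintegral_prod_right'
  have hΨm : Measurable Ψ := hψ.lintegral_prod_right'
  have hΧm : Measurable Χ := hχ.lintegral_prod_right'
  have hcond' : ∀ s t, Φ s ^ (1/2:ℝ) * Ψ t ^ (1/2:ℝ) ≤ Χ ((s + t) / 2) := by
    intro s t
    have := hPL (fun z => φ (s, z)) (fun w => ψ (t, w)) (fun u => χ ((s + t)/2, u))
      (hφ.comp (measurable_prodMk_left)) (hψ.comp (measurable_prodMk_left))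
      (hχ.comp (measurable_prodMk_left)) ?_
    · exact this
    · intro z w
      have := hcond (s, z) (t, w)
      rwa [midpoint_prod, midR] at this
  have key := PL1d_enn hΦm hΨm hΧm hcond'
  have hFub : ∀ (ξ : ℝ × α → ℝ≥0∞), Measurable ξ →
      ∫⁻ p, ξ p = ∫⁻ s, ∫⁻ z, ξ (s, z) := by
    intro ξ hξ
    rw [← lintegral_prod ξ hξ.aemeasurable]
    rfl
  rw [hFub φ hφ, hFub ψ hψ, hFub χ hχ]
  exact key

lemma PLS_transfer {α β : Type*} [MeasureSpace α] [AddCommGroup α] [Module ℝ α]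
    [MeasureSpace β] [AddCommGroup β] [Module ℝ β]
    (e : α ≃ᵐ β) (he : MeasurePreserving e volume volume)
    (hmid : ∀ x y : α, e (midpoint ℝ x y) = midpoint ℝ (e x) (e y))
    (hPL : PLS β) : PLS α := by
  intro φ ψ χ hφ hψ hχ hcond
  have hmid' : ∀ p q : β, e.symm (midpoint ℝ p q) = midpoint ℝ (e.symm p) (e.symm q) := by
    intro p q
    have := hmid (e.symm p) (e.symm q)
    simp only [e.apply_symm_apply] at this
    rw [← this, e.symm_apply_apply]
  have h1 : ∀ (ξ : α → ℝ≥0∞), Measurable ξ → ∫⁻ x, ξ x = ∫⁻ y, ξ (e.symm y) := by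
    intro ξ hξ
    have h2 := he.lintegral_comp (hξ.comp e.symm.measurable)
    simp only [Function.comp] at h2
    simpa [e.symm_apply_apply] using h2
  rw [h1 φ hφ, h1 ψ hψ, h1 χ hχ]
  refine hPL _ _ _ (hφ.comp e.symm.measurable) (hψ.comp e.symm.measurable)
    (hχ.comp e.symm.measurable) ?_
  intro p q
  rw [hmid' p q]
  exact hcond _ _

lemma hrh' (a : ℝ≥0∞) : a ^ (1/2:ℝ) * a ^ (1/2:ℝ) = a := by
  rw [← ENNReal.rpow_add_of_nonneg _ _ (by norm_num) (by norm_num)]; norm_num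

lemma PLS_zero : PLS (Fin 0 → ℝ) := by
  intro φ ψ χ hφ hψ hχ hcond
  have huniv : (volume : Measure (Fin 0 → ℝ)) univ = 1 := by
    rw [volume_pi, Measure.pi_univ]
    simp
  have hsub : ∀ x : Fin 0 → ℝ, x = (default : Fin 0 → ℝ) := fun x => Subsingleton.elim _ _
  have hint : ∀ ξ : (Fin 0 → ℝ) → ℝ≥0∞, ∫⁻ x, ξ x = ξ default := by
    intro ξ
    calc ∫⁻ x, ξ x = ∫⁻ _, ξ default := by congr 1; funext x; rw [hsub x]
      _ = ξ default * volume univ := lintegral_const _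
      _ = ξ default := by rw [huniv, mul_one]
  rw [hint φ, hint ψ, hint χ]
  have := hcond default default
  rwa [midpoint_self] at this

lemma PLS_pi : ∀ d : ℕ, PLS (Fin d → ℝ) := by
  intro d
  induction d with
  | zero => exact PLS_zero
  | succ n ih =>
    have hprod : PLS (ℝ × (Fin n → ℝ)) := PLS_prod _ ih
    set e : (Fin (n+1) → ℝ) ≃ᵐ ℝ × (Fin n → ℝ) :=
      MeasurableEquiv.piFinSuccAbove (fun _ => ℝ) 0 with he_def
    have hep : MeasurePreserving e volume volume :=
      volume_preserving_piFinSuccAbove (fun _ : Fin (n+1) => ℝ) 0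
    refine PLS_transfer e hep ?_ hprod
    intro x y
    have hx : ∀ z : Fin (n+1) → ℝ, e z = (z 0, fun j => z (Fin.succAbove 0 j)) := by
      intro z; rfl
    rw [hx, hx, hx, midpoint_eq_smul_add, midpoint_eq_smul_add]
    rfl

lemma PLS_euclidean (d : ℕ) : PLS (EuclideanSpace ℝ (Fin d)) := by
  refine PLS_transfer (MeasurableEquiv.toLp 2 (Fin d → ℝ)).symm
    (EuclideanSpace.volume_preserving_symm_measurableEquiv_toLp (Fin d)) (fun x y => rfl) (PLS_pi d)

end PLaux

/-- the Prékopa–Leindler inequality with `s = 1/2`: if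
`f(x)^{1/2} g(y)^{1/2} ≤ h((x+y)/2)` for all `x, y`, then
`(∫f)^{1/2} (∫g)^{1/2} ≤ ∫h`. -/
theorem stmt11 {d : ℕ} (f g h : EuclideanSpace ℝ (Fin d) → ℝ)
    (hfm : Measurable f) (hgm : Measurable g) (hhm : Measurable h)
    (hf0 : ∀ x, 0 ≤ f x) (hg0 : ∀ x, 0 ≤ g x) (hh0 : ∀ x, 0 ≤ h x)
    (hcond : ∀ x y, f x ^ (1 / 2 : ℝ) * g y ^ (1 / 2 : ℝ) ≤ h (midpoint ℝ x y)) :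
    (∫⁻ x, ENNReal.ofReal (f x)) ^ (1 / 2 : ℝ) *
        (∫⁻ x, ENNReal.ofReal (g x)) ^ (1 / 2 : ℝ) ≤
      ∫⁻ x, ENNReal.ofReal (h x) := by
  refine PLS_euclidean d _ _ _ hfm.ennreal_ofReal hgm.ennreal_ofReal hhm.ennreal_ofReal ?_
  intro x y
  calc ENNReal.ofReal (f x) ^ (1/2:ℝ) * ENNReal.ofReal (g y) ^ (1/2:ℝ)
      = ENNReal.ofReal (f x ^ (1/2:ℝ)) * ENNReal.ofReal (g y ^ (1/2:ℝ)) := by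
        rw [ENNReal.ofReal_rpow_of_nonneg (hf0 x) (by norm_num),
          ENNReal.ofReal_rpow_of_nonneg (hg0 y) (by norm_num)]
    _ = ENNReal.ofReal (f x ^ (1/2:ℝ) * g y ^ (1/2:ℝ)) :=
        (ENNReal.ofReal_mul (Real.rpow_nonneg (hf0 x) _)).symm
    _ ≤ ENNReal.ofReal (h (midpoint ℝ x y)) := ENNReal.ofReal_le_ofReal (hcond x y)
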